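/- Let G be a nonempty finite bipartite simple graph with no isolated structure constraints, and let λ = |E(G)|. Then for every weighted graph ℂ (a finite set C with a symmetric weight function w^ℂ: C × C → ℚ≥0), the maximum over maps h: V(G) → C of ∑_{{u,v} ∈ E(G)} w^ℂ(h(u), h(v)) equals λ times the maximum over maps h': {1,2} → C of w^ℂ(h'(1), h'(2)). -/

import Mathlib

set_option maxHeartbeats 1000000


/-- A nonempty bipartite graph `G` has, against every weighted graph `ℂ`, the
same optimum as `|E(G)|` copies of a single edge:
`opt(G, ℂ) = |E(G)| · opt(K₂, ℂ)`. -/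
theorem stmt_12 {V : Type} [Fintype V] [DecidableEq V]
    (G : SimpleGraph V) [DecidableRel G.Adj]
    (hbip : G.Colorable 2) (hne : G.edgeFinset.Nonempty)
    {C : Type} [Fintype C] [Nonempty C]
    (w : C → C → ℚ) (hw : ∀ a b, 0 ≤ w a b) (hsymm : ∀ a b, w a b = w b a) :
    Finset.univ.sup' Finset.univ_nonempty
        (fun h : V → C =>
          ∑ e ∈ G.edgeFinset,
            Sym2.lift ⟨fun u v => w (h u) (h v), fun u v => hsymm _ _⟩ e) =
      (G.edgeFinset.card : ℚ) *
        Finset.univ.sup' Finset.univ_nonempty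
          (fun h' : Fin 2 → C => w (h' 0) (h' 1)) := by
  classical
  set M := Finset.univ.sup' Finset.univ_nonempty
      (fun h' : Fin 2 → C => w (h' 0) (h' 1)) with hMdef
  obtain ⟨g, -, hg⟩ := Finset.exists_mem_eq_sup' (Finset.univ_nonempty (α := Fin 2 → C))
      (fun h' : Fin 2 → C => w (h' 0) (h' 1))
  obtain ⟨c⟩ := hbip
  apply le_antisymm
  · apply Finset.sup'_le
    intro h _
    calc ∑ e ∈ G.edgeFinset,
          Sym2.lift ⟨fun u v => w (h u) (h v), fun u v => hsymm _ _⟩ e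
        ≤ ∑ _e ∈ G.edgeFinset, M := by
          apply Finset.sum_le_sum
          intro e _
          induction e using Sym2.ind with
          | _ u v =>
            have := Finset.le_sup' (fun h' : Fin 2 → C => w (h' 0) (h' 1))
              (Finset.mem_univ ![h u, h v])
            simpa only [Sym2.lift_mk, Matrix.cons_val_zero, Matrix.cons_val_one, Matrix.head_cons,
              ← hMdef] using this
      _ = (G.edgeFinset.card : ℚ) * M := by
          rw [Finset.sum_const, nsmul_eq_mul]
  · set h : V → C := fun v => if c v = 0 then g 0 else g 1 with hh
    have key : ∀ e ∈ G.edgeFinset,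
        Sym2.lift ⟨fun u v => w (h u) (h v), fun u v => hsymm _ _⟩ e = M := by
      intro e he
      induction e using Sym2.ind with
      | _ u v =>
        rw [SimpleGraph.mem_edgeFinset, SimpleGraph.mem_edgeSet] at he
        have hcv := c.valid he
        have htwo : ∀ x : Fin 2, x = 0 ∨ x = 1 := by decide
        simp only [Sym2.lift_mk, hh]
        rcases htwo (c u) with h0 | h0 <;> rcases htwo (c v) with h1 | h1
        · exact absurd (h0.trans h1.symm) hcv
        · simp [h0, h1, ← hg, hMdef]
        · simp [h0, h1, hsymm, ← hg, hMdef]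
        · exact absurd (h0.trans h1.symm) hcv
    have hsum : ∑ e ∈ G.edgeFinset,
        Sym2.lift ⟨fun u v => w (h u) (h v), fun u v => hsymm _ _⟩ e
        = (G.edgeFinset.card : ℚ) * M := by
      rw [Finset.sum_congr rfl key, Finset.sum_const, nsmul_eq_mul]
    calc (G.edgeFinset.card : ℚ) * M = _ := hsum.symm
      _ ≤ _ := Finset.le_sup' (fun h : V → C => ∑ e ∈ G.edgeFinset,
          Sym2.lift ⟨fun u v => w (h u) (h v), fun u v => hsymm _ _⟩ e) (Finset.mem_univ h)
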